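/- Define g : ℝ → ℝ by g(θ) = −cos θ · sin θ · (1 − cos²θ)^(−1/2) for θ with sin θ ≠ 0 (and g(θ) = 0 when sin θ = 0). Then for almost every θ ∈ (0, 2π) one has g(θ) = −cos θ · sgn(sin θ), hence |g(θ)| ≤ 1 almost everywhere and g belongs to L²((0, 2π)). In particular the L₍₀₎-trace L₍₀₎u = −x₁x₂·u(x)|_{|x|=1} of the solution u(x) = (1 − x₁²)^(−1/2) of the wave equation, parametrized by x = (cos θ, sin θ), belongs to L²(∂K). -/

import Mathlib

open Real MeasureTheory

lemma measurable_real_sign : Measurable (Real.sign) := by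
  unfold Real.sign
  exact (measurable_const.ite measurableSet_Iio
    (measurable_const.ite measurableSet_Ioi measurable_const))

lemma abs_real_sign_le (s : ℝ) : |Real.sign s| ≤ 1 := by
  rcases lt_trichotomy s 0 with h | h | h
  · simp [Real.sign_of_neg h]
  · simp [h]
  · simp [Real.sign_of_pos h]

/-- The `L₍₀₎`-trace of the solution `u(x) = (1 − x₁²)^(−1/2)` of the wave
equation, namely `g(θ) = −cos θ · sin θ · (1 − cos²θ)^(−1/2)` on the unit circle (set to `0`
where `sin θ = 0`), equals `−cos θ · sgn(sin θ)` almost everywhere on `(0, 2π)`, is bounded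
in absolute value by `1` almost everywhere, and belongs to `L²((0, 2π))`. -/
theorem L0_trace_in_L2 :
    let g : ℝ → ℝ := fun θ =>
      if Real.sin θ = 0 then 0
      else -Real.cos θ * Real.sin θ * (1 - (Real.cos θ) ^ 2) ^ (-(1 / 2 : ℝ))
    (∀ᵐ θ ∂(volume.restrict (Set.Ioo (0:ℝ) (2 * π))),
        g θ = -Real.cos θ * Real.sign (Real.sin θ)) ∧
    (∀ᵐ θ ∂(volume.restrict (Set.Ioo (0:ℝ) (2 * π))), |g θ| ≤ 1) ∧
    MemLp g 2 (volume.restrict (Set.Ioo (0:ℝ) (2 * π))) := by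
  intro g
  have hg : ∀ θ : ℝ, g θ = -Real.cos θ * Real.sign (Real.sin θ) := by
    intro θ
    by_cases hs : Real.sin θ = 0
    · simp [g, hs]
    · have h1 : (1 : ℝ) - (Real.cos θ) ^ 2 = (Real.sin θ) ^ 2 := by
        have := Real.sin_sq_add_cos_sq θ; linarith
      have h2 : ((Real.sin θ ^ 2 : ℝ)) ^ (-(1/2) : ℝ) = |Real.sin θ|⁻¹ := by
        rw [Real.rpow_neg (sq_nonneg _), ← Real.sqrt_eq_rpow, Real.sqrt_sq_eq_abs]
      have h3 : Real.sin θ * |Real.sin θ|⁻¹ = Real.sign (Real.sin θ) := by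
        rcases lt_or_gt_of_ne hs with h | h
        · rw [abs_of_neg h, Real.sign_of_neg h]; field_simp
        · rw [abs_of_pos h, Real.sign_of_pos h]; field_simp
      simp only [g, if_neg hs, h1, h2, mul_assoc, h3]
  have hbd : ∀ θ : ℝ, |g θ| ≤ 1 := by
    intro θ
    rw [hg θ, abs_mul, abs_neg]
    calc |Real.cos θ| * |Real.sign (Real.sin θ)| ≤ 1 * 1 :=
          mul_le_mul (Real.abs_cos_le_one θ) (abs_real_sign_le _) (abs_nonneg _) zero_le_one
      _ = 1 := one_mul 1
  refine ⟨ae_of_all _ hg, ae_of_all _ hbd, ?_⟩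
  have hgm : Measurable g := by
    have : g = fun θ => -Real.cos θ * Real.sign (Real.sin θ) := funext hg
    rw [this]
    exact (Real.measurable_cos.neg).mul (measurable_real_sign.comp Real.measurable_sin)
  haveI : IsFiniteMeasure (volume.restrict (Set.Ioo (0:ℝ) (2 * π))) := by
    constructor
    rw [Measure.restrict_apply_univ, Real.volume_Ioo]
    exact ENNReal.ofReal_lt_top
  exact MemLp.of_bound hgm.aestronglyMeasurable 1 (ae_of_all _ (by simpa using hbd))
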